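/- Let Ω ⊂ ℂⁿ be a bounded domain with C²-smooth boundary and let δ₀ > 0 be such that every point at distance less than δ₀ from ∂Ω has a unique nearest boundary point π(·). Let γ : [0,1] → Ω be a piecewise C¹ curve with δ_Ω(γ(t)) < δ₀ for all t. Then ∫₀¹ |(γ'(t))_N| / δ_Ω(γ(t)) dt ≥ |log( δ_Ω(γ(1)) / δ_Ω(γ(0)) )|. -/

import Mathlib

open Set Metric MeasureTheory Filter Bornology

noncomputable section


/-- Equip `ℂⁿ` with its Borel σ-algebra, so that `Measurable` means Borel measurable. -/
instance {n : ℕ} : MeasurableSpace (EuclideanSpace ℂ (Fin n)) := borel _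

instance {n : ℕ} : BorelSpace (EuclideanSpace ℂ (Fin n)) := ⟨rfl⟩

/-- The Euclidean distance from a point to the boundary of `Ω`. -/
def bdist {n : ℕ} (Ω : Set (EuclideanSpace ℂ (Fin n))) (z : EuclideanSpace ℂ (Fin n)) : ℝ :=
  Metric.infDist z (frontier Ω)

/-- A curve `γ : [a,b] → ℂⁿ` is piecewise `C¹` if it is continuous and there is a finite
partition of `[a,b]` on each closed subinterval of which `γ` is `C¹`. -/
def PiecewiseC1On {n : ℕ} (γ : ℝ → EuclideanSpace ℂ (Fin n)) (a b : ℝ) : Prop :=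
  ContinuousOn γ (Set.Icc a b) ∧
  ∃ (k : ℕ) (t : Fin (k + 1) → ℝ), StrictMono t ∧ t 0 = a ∧ t (Fin.last k) = b ∧
    ∀ i : Fin k, ContDiffOn ℝ 1 γ (Set.Icc (t i.castSucc) (t i.succ))

/-- The `F`-length `∫_a^b F(γ(t), γ'(t)) dt` of a curve. -/
def Flength {n : ℕ} (F : EuclideanSpace ℂ (Fin n) → EuclideanSpace ℂ (Fin n) → ℝ)
    (γ : ℝ → EuclideanSpace ℂ (Fin n)) (a b : ℝ) : ℝ :=
  ∫ t in a..b, F (γ t) (deriv γ t)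

/-- The Euclidean length `∫_a^b |γ'(t)| dt` of a curve. -/
def eLength {n : ℕ} (γ : ℝ → EuclideanSpace ℂ (Fin n)) (a b : ℝ) : ℝ :=
  ∫ t in a..b, ‖deriv γ t‖

/-- `γ` is a piecewise `C¹` curve in `Ω` from `x` to `y`, parametrized on `[0,1]`. -/
def IsCurveIn {n : ℕ} (Ω : Set (EuclideanSpace ℂ (Fin n))) (x y : EuclideanSpace ℂ (Fin n))
    (γ : ℝ → EuclideanSpace ℂ (Fin n)) : Prop :=
  PiecewiseC1On γ 0 1 ∧ (∀ t ∈ Set.Icc (0 : ℝ) 1, γ t ∈ Ω) ∧ γ 0 = x ∧ γ 1 = y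

/-- The pseudodistance associated to the Finsler-type integrand `F`. -/
def dF {n : ℕ} (Ω : Set (EuclideanSpace ℂ (Fin n)))
    (F : EuclideanSpace ℂ (Fin n) → EuclideanSpace ℂ (Fin n) → ℝ)
    (x y : EuclideanSpace ℂ (Fin n)) : ℝ :=
  sInf {L | ∃ γ, IsCurveIn Ω x y γ ∧ L = Flength F γ 0 1}

/-- `Ω` has `C²`-smooth boundary: `Ω = {r < 0}` for some function `r` of class `C²` on a
neighborhood of the closure of `Ω` whose differential does not vanish on `∂Ω`. -/
def HasC2Boundary {n : ℕ} (Ω : Set (EuclideanSpace ℂ (Fin n))) : Prop :=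
  ∃ (U : Set (EuclideanSpace ℂ (Fin n))) (r : EuclideanSpace ℂ (Fin n) → ℝ),
    IsOpen U ∧ closure Ω ⊆ U ∧ ContDiffOn ℝ 2 r U ∧ Ω = {x | r x < 0} ∧
    ∀ x ∈ frontier Ω, fderiv ℝ r x ≠ 0

/-- The orthogonal projection (w.r.t. the standard Hermitian inner product) of the vector `X`
onto the complex line `ℂ·(p − z)`; for `z ∈ Ω` near the boundary with nearest boundary point
`p = π(z)`, this line is `ℂ·n(π(z))`, the complex line spanned by the outer unit normal, and
this is the normal component `X_N` of `X`. -/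
def normalPart {n : ℕ} (p z X : EuclideanSpace ℂ (Fin n)) : EuclideanSpace ℂ (Fin n) :=
  (‖p - z‖ ^ 2 : ℝ)⁻¹ • ((inner ℂ (p - z) X : ℂ) • (p - z))

/-- `π` is a nearest-point projection to `∂Ω`, defined (and unique) at distance `< δ₀`
from `∂Ω`. -/
def IsNearestPointProj {n : ℕ} (Ω : Set (EuclideanSpace ℂ (Fin n))) (δ₀ : ℝ)
    (π : EuclideanSpace ℂ (Fin n) → EuclideanSpace ℂ (Fin n)) : Prop :=
  ∀ z, Metric.infDist z (frontier Ω) < δ₀ →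
    π z ∈ frontier Ω ∧ dist z (π z) = Metric.infDist z (frontier Ω) ∧
      ∀ q ∈ frontier Ω, dist z q = Metric.infDist z (frontier Ω) → q = π z


section Aux

variable {n : ℕ}

variable {n : ℕ}

private lemma normalPart_norm (p z X : EuclideanSpace ℂ (Fin n)) :
    ‖normalPart p z X‖ = ‖(inner ℂ (p - z) X : ℂ)‖ / ‖p - z‖ := by
  by_cases h : p - z = 0
  · simp [normalPart, h]
  · have hnz : ‖p - z‖ ≠ 0 := norm_ne_zero_iff.2 h
    rw [normalPart, norm_smul, norm_smul]
    simp only [norm_inv, norm_pow, norm_norm, Real.norm_eq_abs]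
    rw [abs_of_nonneg (by positivity)]
    field_simp


private lemma normalPart_neg (p z X : EuclideanSpace ℂ (Fin n)) :
    ‖normalPart p z (-X)‖ = ‖normalPart p z X‖ := by
  simp only [normalPart, inner_neg_right, neg_smul, smul_neg, norm_neg]


private lemma piContinuousAt {F : Set (EuclideanSpace ℂ (Fin n))} (hFc : IsCompact F)
    {δ₀ : ℝ} {π : EuclideanSpace ℂ (Fin n) → EuclideanSpace ℂ (Fin n)}
    (hπ : ∀ z, infDist z F < δ₀ →
      π z ∈ F ∧ dist z (π z) = infDist z F ∧ ∀ q ∈ F, dist z q = infDist z F → q = π z)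
    {z : EuclideanSpace ℂ (Fin n)} (hz : infDist z F < δ₀) : ContinuousAt π z := by
  rw [Metric.continuousAt_iff]
  intro ε hε
  obtain ⟨hpF, hpd, hpu⟩ := hπ z hz
  set δz := infDist z F with hδz
  set K := F \ Metric.ball (π z) ε with hK
  have hKc : IsCompact K :=
    hFc.of_isClosed_subset (hFc.isClosed.inter Metric.isOpen_ball.isClosed_compl)
      Set.diff_subset
  by_cases hKne : K.Nonempty
  · obtain ⟨q₀, hq₀K, hq₀'⟩ := hKc.exists_isMinOn hKne
      ((continuous_const.dist continuous_id).continuousOn)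
    have hq₀ : ∀ q ∈ K, dist z q₀ ≤ dist z q := fun q hq => hq₀' hq
    have hq₀F : q₀ ∈ F := hq₀K.1
    have hmgt : δz < dist z q₀ := by
      rcases lt_or_eq_of_le (Metric.infDist_le_dist_of_mem hq₀F) with h | h
      · exact h
      · exfalso
        have hq := hpu q₀ hq₀F h.symm
        have : q₀ ∉ Metric.ball (π z) ε := hq₀K.2
        rw [hq] at this
        exact this (Metric.mem_ball_self hε)
    set m := dist z q₀ with hm
    have h1 : 0 < m - δz := sub_pos.2 hmgt
    have h2 : 0 < δ₀ - δz := sub_pos.2 hz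
    refine ⟨min ((m - δz)/3) ((δ₀ - δz)/2), lt_min (by linarith) (by linarith), ?_⟩
    intro w hw
    have hw1 : dist w z < (m - δz)/3 := lt_of_lt_of_le hw (min_le_left _ _)
    have hw2 : dist w z < (δ₀ - δz)/2 := lt_of_lt_of_le hw (min_le_right _ _)
    have hinf : infDist w F ≤ δz + dist w z := by
      calc infDist w F ≤ infDist z F + dist w z := Metric.infDist_le_infDist_add_dist
        _ = δz + dist w z := by rw [hδz]
    have hwδ : infDist w F < δ₀ := by linarith
    obtain ⟨hwF, hwdist, -⟩ := hπ w hwδ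
    have hnK : π w ∉ K := by
      intro hmem
      have h3 : m ≤ dist z (π w) := hq₀ _ hmem
      have h5 : dist z (π w) ≤ dist z w + dist w (π w) := dist_triangle _ _ _
      rw [dist_comm z w] at h5
      have h6 : dist w (π w) ≤ δz + dist w z := by rw [hwdist]; exact hinf
      linarith
    have hball : π w ∈ Metric.ball (π z) ε := by
      by_contra hc
      exact hnK ⟨hwF, hc⟩
    rwa [Metric.mem_ball] at hball
  · have h2 : 0 < δ₀ - δz := sub_pos.2 hz
    refine ⟨(δ₀ - δz)/2, by linarith, ?_⟩
    intro w hw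
    have hinf : infDist w F ≤ δz + dist w z := by
      calc infDist w F ≤ infDist z F + dist w z := Metric.infDist_le_infDist_add_dist
        _ = δz + dist w z := by rw [hδz]
    have hwδ : infDist w F < δ₀ := by linarith
    obtain ⟨hwF, -, -⟩ := hπ w hwδ
    have hball : π w ∈ Metric.ball (π z) ε := by
      by_contra hc
      exact hKne ⟨π w, hwF, hc⟩
    rwa [Metric.mem_ball] at hball

private lemma hContOn {F : Set (EuclideanSpace ℂ (Fin n))} (hFc : IsCompact F)
    {δ₀ : ℝ} {π : EuclideanSpace ℂ (Fin n) → EuclideanSpace ℂ (Fin n)}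
    (hπ : ∀ z, infDist z F < δ₀ →
      π z ∈ F ∧ dist z (π z) = infDist z F ∧ ∀ q ∈ F, dist z q = infDist z F → q = π z)
    {c d : ℝ} (hcd : c < d) {γ : ℝ → EuclideanSpace ℂ (Fin n)}
    (hγ : ContDiffOn ℝ 1 γ (Set.Icc c d))
    (hpos : ∀ t ∈ Set.Icc c d, 0 < infDist (γ t) F)
    (hlt : ∀ t ∈ Set.Icc c d, infDist (γ t) F < δ₀) :
    ContinuousOn (fun t => ‖normalPart (π (γ t)) (γ t) (derivWithin γ (Set.Icc c d) t)‖
      / infDist (γ t) F) (Set.Icc c d) := by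
  have hγc : ContinuousOn γ (Set.Icc c d) := hγ.continuousOn
  have hfc : ContinuousOn (fun t => infDist (γ t) F) (Set.Icc c d) :=
    (Metric.continuous_infDist_pt F).comp_continuousOn hγc
  have hPc : ContinuousOn (fun t => π (γ t)) (Set.Icc c d) := fun t ht =>
    (piContinuousAt hFc hπ (hlt t ht)).comp_continuousWithinAt (hγc t ht)
  have hVc : ContinuousOn (fun t => derivWithin γ (Set.Icc c d) t) (Set.Icc c d) :=
    hγ.continuousOn_derivWithin (uniqueDiffOn_Icc hcd) le_rfl
  have hsub : ContinuousOn (fun t => π (γ t) - γ t) (Set.Icc c d) := hPc.sub hγc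
  have hne : ∀ t ∈ Set.Icc c d, π (γ t) - γ t ≠ 0 := by
    intro t ht h0
    rw [sub_eq_zero] at h0
    have h1 := (hπ (γ t) (hlt t ht)).2.1
    have h2 := hpos t ht
    rw [← h1, h0, dist_self] at h2
    exact lt_irrefl _ h2
  have hnum : ContinuousOn
      (fun t => ‖(inner ℂ (π (γ t) - γ t) (derivWithin γ (Set.Icc c d) t) : ℂ)‖) (Set.Icc c d) := by
    apply ContinuousOn.norm
    exact continuous_inner.comp_continuousOn (hsub.prodMk hVc)
  apply ContinuousOn.congr
    (f := fun t => ‖(inner ℂ (π (γ t) - γ t) (derivWithin γ (Set.Icc c d) t) : ℂ)‖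
      / ‖π (γ t) - γ t‖ / infDist (γ t) F)
  · exact (hnum.div hsub.norm (fun t ht => norm_ne_zero_iff.2 (hne t ht))).div hfc
      (fun t ht => (hpos t ht).ne')
  · intro t ht
    simp only
    rw [normalPart_norm]

private lemma oneSided {F : Set (EuclideanSpace ℂ (Fin n))} (hFc : IsCompact F)
    {δ₀ : ℝ} {π : EuclideanSpace ℂ (Fin n) → EuclideanSpace ℂ (Fin n)}
    (hπ : ∀ z, infDist z F < δ₀ →
      π z ∈ F ∧ dist z (π z) = infDist z F ∧ ∀ q ∈ F, dist z q = infDist z F → q = π z)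
    {c d : ℝ} (hcd : c < d) {γ : ℝ → EuclideanSpace ℂ (Fin n)}
    (hγ : ContDiffOn ℝ 1 γ (Set.Icc c d))
    (hpos : ∀ t ∈ Set.Icc c d, 0 < infDist (γ t) F)
    (hlt : ∀ t ∈ Set.Icc c d, infDist (γ t) F < δ₀) :
    Real.log (infDist (γ d) F) - Real.log (infDist (γ c) F) ≤
      ∫ t in c..d,
        ‖normalPart (π (γ t)) (γ t) (derivWithin γ (Set.Icc c d) t)‖ / infDist (γ t) F := by
  set f : ℝ → ℝ := fun t => infDist (γ t) F with hf
  set h : ℝ → ℝ :=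
    fun t => ‖normalPart (π (γ t)) (γ t) (derivWithin γ (Set.Icc c d) t)‖ / f t with hh
  set L : ℝ → ℝ := fun t => Real.log (f t) with hL
  have hsq : ∀ w : EuclideanSpace ℂ (Fin n), ((inner ℂ w w : ℂ)).re = ‖w‖ ^ 2 := by
    intro w
    have := inner_self_eq_norm_sq (𝕜 := ℂ) w
    simpa using this
  have hγc : ContinuousOn γ (Set.Icc c d) := hγ.continuousOn
  have hfc : ContinuousOn f (Set.Icc c d) := (Metric.continuous_infDist_pt F).comp_continuousOn hγc
  have hLc : ContinuousOn L (Set.Icc c d) := hfc.log (fun t ht => (hpos t ht).ne')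
  have hhc : ContinuousOn h (Set.Icc c d) := hContOn hFc hπ hcd hγ hpos hlt
  set H : ℝ → ℝ := fun u => h (Set.projIcc c d hcd.le u) with hHdef
  have hHc : Continuous H := by
    apply hhc.comp_continuous
    · exact continuous_subtype_val.comp (continuous_projIcc)
    · exact fun u => (Set.projIcc c d hcd.le u).2
  have hHeq : ∀ u ∈ Set.Icc c d, H u = h u := by
    intro u hu
    rw [hHdef]
    simp [Set.projIcc_of_mem hcd.le hu]
  set B : ℝ → ℝ := fun s => L c + ∫ u in c..s, H u with hB
  have hBd : ∀ x : ℝ, HasDerivAt B (H x) x := by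
    intro x
    have h1 := intervalIntegral.integral_hasDerivAt_right (hHc.intervalIntegrable c x)
      hHc.stronglyMeasurable.stronglyMeasurableAtFilter hHc.continuousAt
    exact h1.const_add (L c)
  have key : ∀ x ∈ Set.Icc c d, L x ≤ B x := by
    apply image_le_of_liminf_slope_right_le_deriv_boundary hLc
    · simp [hB, intervalIntegral.integral_same]
    · exact fun x _ => (hBd x).continuousAt.continuousWithinAt
    · exact fun x _ => (hBd x).hasDerivWithinAt
    · -- the slope bound
      intro x hx r hr
      have hx' : x ∈ Set.Icc c d := Set.Ico_subset_Icc_self hx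
      rw [hHeq x hx'] at hr
      obtain ⟨hpF, hpd, -⟩ := hπ (γ x) (hlt x hx')
      set p := π (γ x) with hp
      set v := derivWithin γ (Set.Icc c d) x with hv
      have hfx : 0 < f x := hpos x hx'
      have hnorm : ‖γ x - p‖ = f x := by rw [← dist_eq_norm]; exact hpd
      have hvd : HasDerivWithinAt γ v (Set.Icc c d) x :=
        ((hγ.differentiableOn one_ne_zero) x hx').hasDerivWithinAt
      have hgd : HasDerivWithinAt (fun u => γ u - p) v (Set.Icc c d) x := hvd.sub_const p
      have hid : HasDerivWithinAt (fun u => (inner ℂ (γ u - p) (γ u - p) : ℂ))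
          ((inner ℂ (γ x - p) v : ℂ) + (inner ℂ v (γ x - p) : ℂ)) (Set.Icc c d) x :=
        hgd.inner ℂ hgd
      have hreal : HasDerivWithinAt (fun u => ((inner ℂ (γ u - p) (γ u - p) : ℂ)).re)
          (((inner ℂ (γ x - p) v : ℂ) + (inner ℂ v (γ x - p) : ℂ)).re) (Set.Icc c d) x := by
        exact Complex.reCLM.hasFDerivAt.comp_hasDerivWithinAt x hid
      have hNpos : (0:ℝ) < ((inner ℂ (γ x - p) (γ x - p) : ℂ)).re := by
        rw [hsq, hnorm]
        positivity
      set D : ℝ := (((inner ℂ (γ x - p) v : ℂ) + (inner ℂ v (γ x - p) : ℂ)).re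
        / ((inner ℂ (γ x - p) (γ x - p) : ℂ)).re) / 2 with hD
      set φ : ℝ → ℝ := fun u => Real.log ((inner ℂ (γ u - p) (γ u - p) : ℂ)).re / 2 with hφdef
      have hφ : HasDerivWithinAt φ D (Set.Icc c d) x := (hreal.log hNpos.ne').div_const 2
      have hφeq : ∀ u : ℝ, φ u = Real.log ‖γ u - p‖ := by
        intro u
        rw [hφdef]
        simp only
        rw [hsq, Real.log_pow]
        push_cast
        ring
      have hDle : D ≤ h x := by
        have hconj : (inner ℂ v (γ x - p) : ℂ) = (starRingEnd ℂ) (inner ℂ (γ x - p) v : ℂ) :=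
          (inner_conj_symm v (γ x - p)).symm
        have h1 : ((inner ℂ (γ x - p) v : ℂ) + (inner ℂ v (γ x - p) : ℂ)).re
            = 2 * ((inner ℂ (γ x - p) v : ℂ)).re := by
          rw [hconj, Complex.add_re, Complex.conj_re]
          ring
        have hflip : (inner ℂ (p - γ x) v : ℂ) = - (inner ℂ (γ x - p) v : ℂ) := by
          rw [← neg_sub (γ x) p, inner_neg_left]
        have h2 : |((inner ℂ (γ x - p) v : ℂ)).re| ≤ ‖(inner ℂ (p - γ x) v : ℂ)‖ := by
          rw [hflip, norm_neg]
          exact Complex.abs_re_le_norm _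
        have hpz : ‖p - γ x‖ = f x := by rw [← norm_neg, neg_sub, hnorm]
        have h3 : h x = ‖(inner ℂ (p - γ x) v : ℂ)‖ / (f x)^2 := by
          have e0 : h x = ‖normalPart p (γ x) v‖ / f x := rfl
          rw [e0, normalPart_norm, hpz, div_div, ← pow_two]
        rw [hD, h1, h3, hsq, hnorm]
        have h4 : 2 * ((inner ℂ (γ x - p) v : ℂ)).re / (f x ^ 2) / 2
            = ((inner ℂ (γ x - p) v : ℂ)).re / f x ^ 2 := by ring
        rw [h4]
        have h5 : ((inner ℂ (γ x - p) v : ℂ)).re ≤ ‖(inner ℂ (p - γ x) v : ℂ)‖ :=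
          (le_abs_self _).trans h2
        gcongr
      -- now produce the frequent-slope statement
      have hDlt : D < r := lt_of_le_of_lt hDle hr
      have hslope : Filter.Tendsto (slope φ x) (nhdsWithin x (Set.Ioi x)) (nhds D) := by
        have h1 : HasDerivWithinAt φ D (Set.Icc x d) x := hφ.mono (Set.Icc_subset_Icc hx'.1 le_rfl)
        have h2 := hasDerivWithinAt_iff_tendsto_slope.1 h1
        rw [Set.Icc_diff_left] at h2
        rwa [nhdsWithin_Ioc_eq_nhdsGT hx.2] at h2
      have hev1 : ∀ᶠ u in nhdsWithin x (Set.Ioi x), slope φ x u < r :=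
        hslope.eventually_lt_const hDlt
      have hev2 : ∀ᶠ u in nhdsWithin x (Set.Ioi x), u ∈ Set.Ioc x d :=
        Ioc_mem_nhdsGT_of_mem ⟨le_rfl, hx.2⟩
      refine ((hev1.and hev2).mono ?_).frequently
      rintro u ⟨h1u, h2u⟩
      have hu' : u ∈ Set.Icc c d := ⟨hx'.1.trans h2u.1.le, h2u.2⟩
      have e1 : L x = φ x := by
        rw [hφeq x]
        show Real.log (f x) = Real.log ‖γ x - p‖
        rw [hnorm]
      have e2 : L u ≤ φ u := by
        rw [hφeq u]
        apply Real.log_le_log (hpos u hu')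
        calc f u ≤ dist (γ u) p := Metric.infDist_le_dist_of_mem hpF
          _ = ‖γ u - p‖ := dist_eq_norm _ _
      have hLφ : L u - L x ≤ φ u - φ x := by rw [e1]; linarith
      have hsl : slope L x u ≤ slope φ x u := by
        rw [slope_def_field, slope_def_field]
        exact div_le_div_of_nonneg_right hLφ (sub_nonneg.2 h2u.1.le)
      exact lt_of_le_of_lt hsl h1u
  have hkey := key d (Set.right_mem_Icc.2 hcd.le)
  have hHh : (∫ u in c..d, H u) = ∫ u in c..d, h u :=
    intervalIntegral.integral_congr (fun u hu => hHeq u (by rwa [Set.uIcc_of_le hcd.le] at hu))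
  have hBd2 : B d = L c + ∫ u in c..d, h u := by rw [hB]; simp only; rw [hHh]
  show L d - L c ≤ ∫ t in c..d, h t
  rw [hBd2] at hkey
  linarith

private lemma twoSided {F : Set (EuclideanSpace ℂ (Fin n))} (hFc : IsCompact F)
    {δ₀ : ℝ} {π : EuclideanSpace ℂ (Fin n) → EuclideanSpace ℂ (Fin n)}
    (hπ : ∀ z, infDist z F < δ₀ →
      π z ∈ F ∧ dist z (π z) = infDist z F ∧ ∀ q ∈ F, dist z q = infDist z F → q = π z)
    {c d : ℝ} (hcd : c < d) {γ : ℝ → EuclideanSpace ℂ (Fin n)}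
    (hγ : ContDiffOn ℝ 1 γ (Set.Icc c d))
    (hpos : ∀ t ∈ Set.Icc c d, 0 < infDist (γ t) F)
    (hlt : ∀ t ∈ Set.Icc c d, infDist (γ t) F < δ₀) :
    |Real.log (infDist (γ d) F) - Real.log (infDist (γ c) F)| ≤
      ∫ t in c..d,
        ‖normalPart (π (γ t)) (γ t) (derivWithin γ (Set.Icc c d) t)‖ / infDist (γ t) F := by
  rw [abs_sub_le_iff]
  refine ⟨oneSided hFc hπ hcd hγ hpos hlt, ?_⟩
  set σ : ℝ → ℝ := fun u => c + d - u with hσ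
  have hσmaps : Set.MapsTo σ (Set.Icc c d) (Set.Icc c d) := by
    intro u hu
    exact ⟨by simp only [hσ]; linarith [hu.2], by simp only [hσ]; linarith [hu.1]⟩
  have hγ' : ContDiffOn ℝ 1 (γ ∘ σ) (Set.Icc c d) :=
    hγ.comp ((contDiff_const.sub contDiff_id).contDiffOn) hσmaps
  have hder : ∀ u ∈ Set.Icc c d,
      derivWithin (γ ∘ σ) (Set.Icc c d) u = -(derivWithin γ (Set.Icc c d) (σ u)) := by
    intro u hu
    have h1 : HasDerivWithinAt σ (-1) (Set.Icc c d) u := by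
      simpa using (hasDerivWithinAt_id u (Set.Icc c d)).const_sub (c + d)
    have h2 : HasDerivWithinAt γ (derivWithin γ (Set.Icc c d) (σ u)) (Set.Icc c d) (σ u) :=
      ((hγ.differentiableOn one_ne_zero) (σ u) (hσmaps hu)).hasDerivWithinAt
    have h3 := h2.scomp u h1 hσmaps
    have h4 := h3.derivWithin (uniqueDiffOn_Icc hcd u hu)
    rw [h4]
    simp
  have happ := oneSided hFc hπ hcd hγ' (fun s hs => hpos _ (hσmaps hs))
    (fun s hs => hlt _ (hσmaps hs))
  have e1 : (γ ∘ σ) d = γ c := by simp [hσ, Function.comp]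
  have e2 : (γ ∘ σ) c = γ d := by
    simp only [Function.comp, hσ]
    norm_num
  have e3 : (∫ s in c..d, ‖normalPart (π ((γ ∘ σ) s)) ((γ ∘ σ) s)
        (derivWithin (γ ∘ σ) (Set.Icc c d) s)‖ / infDist ((γ ∘ σ) s) F)
      = ∫ s in c..d,
        ‖normalPart (π (γ s)) (γ s) (derivWithin γ (Set.Icc c d) s)‖ / infDist (γ s) F := by
    rw [intervalIntegral.integral_congr
      (g := fun s => ‖normalPart (π (γ (σ s))) (γ (σ s)) (derivWithin γ (Set.Icc c d) (σ s))‖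
        / infDist (γ (σ s)) F) ?_]
    · have hrev := intervalIntegral.integral_comp_sub_left (a := c) (b := d)
        (fun s => ‖normalPart (π (γ s)) (γ s) (derivWithin γ (Set.Icc c d) s)‖
          / infDist (γ s) F) (c + d)
      simp only [hσ]
      rw [hrev]
      norm_num
    · intro s hs
      rw [Set.uIcc_of_le hcd.le] at hs
      simp only [Function.comp]
      rw [hder s hs, normalPart_neg]
  rw [e1, e2, e3] at happ
  exact happ

private lemma pieceBound {F : Set (EuclideanSpace ℂ (Fin n))} (hFc : IsCompact F)
    {δ₀ : ℝ} {π : EuclideanSpace ℂ (Fin n) → EuclideanSpace ℂ (Fin n)}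
    (hπ : ∀ z, infDist z F < δ₀ →
      π z ∈ F ∧ dist z (π z) = infDist z F ∧ ∀ q ∈ F, dist z q = infDist z F → q = π z)
    {c d : ℝ} (hcd : c < d) {γ : ℝ → EuclideanSpace ℂ (Fin n)}
    (hγ : ContDiffOn ℝ 1 γ (Set.Icc c d))
    (hpos : ∀ t ∈ Set.Icc c d, 0 < infDist (γ t) F)
    (hlt : ∀ t ∈ Set.Icc c d, infDist (γ t) F < δ₀) :
    IntervalIntegrable
      (fun t => ‖normalPart (π (γ t)) (γ t) (deriv γ t)‖ / infDist (γ t) F) volume c d ∧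
    |Real.log (infDist (γ d) F) - Real.log (infDist (γ c) F)| ≤
      ∫ t in c..d, ‖normalPart (π (γ t)) (γ t) (deriv γ t)‖ / infDist (γ t) F := by
  have hcont := hContOn hFc hπ hcd hγ hpos hlt
  have hint : IntervalIntegrable
      (fun t => ‖normalPart (π (γ t)) (γ t) (derivWithin γ (Set.Icc c d) t)‖ / infDist (γ t) F)
      volume c d := by
    apply ContinuousOn.intervalIntegrable
    rwa [Set.uIcc_of_le hcd.le]
  have hIoo : ∀ t ∈ Set.Ioo c d, derivWithin γ (Set.Icc c d) t = deriv γ t := fun t ht =>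
    derivWithin_of_mem_nhds (Icc_mem_nhds ht.1 ht.2)
  have hne : ∀ᵐ s ∂(volume : Measure ℝ), s ≠ d := by
    rw [ae_iff]
    have : {s : ℝ | ¬ s ≠ d} = {d} := by ext s; simp
    rw [this]
    exact Real.volume_singleton
  have himp : ∀ᵐ s ∂(volume : Measure ℝ), s ∈ Set.uIoc c d →
      (fun t => ‖normalPart (π (γ t)) (γ t) (derivWithin γ (Set.Icc c d) t)‖
        / infDist (γ t) F) s
      = (fun t => ‖normalPart (π (γ t)) (γ t) (deriv γ t)‖ / infDist (γ t) F) s := by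
    filter_upwards [hne] with s hsne hs
    rw [Set.uIoc_of_le hcd.le] at hs

    rw [hIoo s ⟨hs.1, lt_of_le_of_ne hs.2 hsne⟩]
  have hrestrict : (fun t => ‖normalPart (π (γ t)) (γ t) (derivWithin γ (Set.Icc c d) t)‖
        / infDist (γ t) F)
      =ᵐ[volume.restrict (Set.uIoc c d)]
      (fun t => ‖normalPart (π (γ t)) (γ t) (deriv γ t)‖ / infDist (γ t) F) := by
    filter_upwards [ae_restrict_mem measurableSet_uIoc, ae_restrict_of_ae himp] with s h1 h2
    exact h2 h1
  constructor
  · rw [intervalIntegrable_iff] at hint ⊢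
    exact hint.congr hrestrict
  · have := twoSided hFc hπ hcd hγ hpos hlt
    rwa [intervalIntegral.integral_congr_ae himp] at this

end Aux

/-- integrated estimate in the proof of Lemma 2.3. For a piecewise `C¹`
curve `γ` in `Ω` staying at distance `< δ₀` from the boundary,
`∫₀¹ |(γ'(t))_N| / δ(γ(t)) dt ≥ |log(δ(γ(1))/δ(γ(0)))|`. -/
theorem statement6 {n : ℕ} (Ω : Set (EuclideanSpace ℂ (Fin n)))
    (hΩo : IsOpen Ω) (hΩc : IsConnected Ω) (hΩb : IsBounded Ω) (hbd : HasC2Boundary Ω)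
    (δ₀ : ℝ) (hδ₀ : 0 < δ₀) (π : EuclideanSpace ℂ (Fin n) → EuclideanSpace ℂ (Fin n))
    (hπ : IsNearestPointProj Ω δ₀ π)
    (γ : ℝ → EuclideanSpace ℂ (Fin n)) (hγ : PiecewiseC1On γ 0 1)
    (hγΩ : ∀ t ∈ Set.Icc (0 : ℝ) 1, γ t ∈ Ω)
    (hγδ : ∀ t ∈ Set.Icc (0 : ℝ) 1, bdist Ω (γ t) < δ₀) :
    (∫ t in (0 : ℝ)..1,
        ‖normalPart (π (γ t)) (γ t) (deriv γ t)‖ / Metric.infDist (γ t) (frontier Ω)) ≥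
      |Real.log (bdist Ω (γ 1) / bdist Ω (γ 0))| := by
  classical
  by_cases hFne : (frontier Ω).Nonempty
  case neg =>
    rw [Set.not_nonempty_iff_eq_empty] at hFne
    simp [bdist, hFne, Metric.infDist_empty, Real.log_zero]
  case pos =>
  set F := frontier Ω with hF
  have hFc : IsCompact F :=
    isCompact_of_isClosed_isBounded isClosed_frontier (hΩb.closure.subset frontier_subset_closure)
  have hpos : ∀ s ∈ Set.Icc (0:ℝ) 1, 0 < infDist (γ s) F := by
    intro s hs
    have hmem := hγΩ s hs
    have hnotin : γ s ∉ F := by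
      rw [hF, hΩo.frontier_eq]
      intro hin
      exact hin.2 hmem
    exact (isClosed_frontier.notMem_iff_infDist_pos hFne).1 hnotin
  have hδlt : ∀ s ∈ Set.Icc (0:ℝ) 1, infDist (γ s) F < δ₀ := hγδ
  obtain ⟨hγcont, k, t, htmono, ht0, htlast, hC1⟩ := hγ
  set T : ℕ → ℝ := fun i => t ⟨min i k, Nat.lt_succ_of_le (min_le_right i k)⟩ with hT
  have hTeq : ∀ i (h : i ≤ k), T i = t ⟨i, Nat.lt_succ_of_le h⟩ := by
    intro i h
    show t ⟨min i k, _⟩ = t ⟨i, _⟩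
    congr 1
    apply Fin.ext
    simp only [min_eq_left h]
  have hT0 : T 0 = 0 := by
    rw [hTeq 0 (Nat.zero_le k), ← ht0]
    congr 1
  have hTk : T k = 1 := by
    rw [hTeq k le_rfl, ← htlast]
    congr 1
  have hTlt : ∀ i, i < k → T i < T (i+1) := by
    intro i hi
    rw [hTeq i hi.le, hTeq (i+1) hi]
    exact htmono (by simp [Fin.lt_def])
  have hTmem : ∀ i, i ≤ k → T i ∈ Set.Icc (0:ℝ) 1 := by
    intro i hi
    rw [hTeq i hi]
    constructor
    · rw [← ht0]; exact htmono.monotone (Fin.zero_le _)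
    · rw [← htlast]; exact htmono.monotone (Fin.le_last _)
  have hsub : ∀ i, i < k → Set.Icc (T i) (T (i+1)) ⊆ Set.Icc (0:ℝ) 1 := by
    intro i hi
    exact Set.Icc_subset_Icc (hTmem i hi.le).1 (hTmem (i+1) hi).2
  have hpieceC1 : ∀ i, i < k → ContDiffOn ℝ 1 γ (Set.Icc (T i) (T (i+1))) := by
    intro i hi
    have h1 := hC1 ⟨i, hi⟩
    have e1 : T i = t (Fin.castSucc ⟨i, hi⟩) := by
      rw [hTeq i hi.le]; congr 1
    have e2 : T (i+1) = t (Fin.succ ⟨i, hi⟩) := by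
      rw [hTeq (i+1) hi]; congr 1
    rw [e1, e2]
    exact h1
  have hpiece : ∀ i, i < k →
      IntervalIntegrable
        (fun s => ‖normalPart (π (γ s)) (γ s) (deriv γ s)‖ / infDist (γ s) F) volume
        (T i) (T (i+1)) ∧
      |Real.log (infDist (γ (T (i+1))) F) - Real.log (infDist (γ (T i)) F)| ≤
        ∫ s in (T i)..(T (i+1)), ‖normalPart (π (γ s)) (γ s) (deriv γ s)‖ / infDist (γ s) F := by
    intro i hi
    exact pieceBound hFc hπ (hTlt i hi) (hpieceC1 i hi)
      (fun s hs => hpos s (hsub i hi hs)) (fun s hs => hδlt s (hsub i hi hs))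
  have hksum : (∫ s in (0:ℝ)..1, ‖normalPart (π (γ s)) (γ s) (deriv γ s)‖ / infDist (γ s) F)
      = ∑ i ∈ Finset.range k,
        ∫ s in (T i)..(T (i+1)), ‖normalPart (π (γ s)) (γ s) (deriv γ s)‖ / infDist (γ s) F := by
    rw [← hT0, ← hTk]
    exact (intervalIntegral.sum_integral_adjacent_intervals (fun i hi => (hpiece i hi).1)).symm
  have htele : Real.log (infDist (γ 1) F) - Real.log (infDist (γ 0) F)
      = ∑ i ∈ Finset.range k,
        (Real.log (infDist (γ (T (i+1))) F) - Real.log (infDist (γ (T i)) F)) := by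
    rw [Finset.sum_range_sub (fun i => Real.log (infDist (γ (T i)) F))]
    rw [hT0, hTk]
  have habs : |Real.log (infDist (γ 1) F) - Real.log (infDist (γ 0) F)| ≤
      ∫ s in (0:ℝ)..1, ‖normalPart (π (γ s)) (γ s) (deriv γ s)‖ / infDist (γ s) F := by
    rw [htele, hksum]
    refine le_trans (Finset.abs_sum_le_sum_abs _ _) (Finset.sum_le_sum ?_)
    intro i hi
    exact (hpiece i (Finset.mem_range.1 hi)).2
  have hlogdiv : Real.log (bdist Ω (γ 1) / bdist Ω (γ 0))
      = Real.log (infDist (γ 1) F) - Real.log (infDist (γ 0) F) := by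
    have h0 : bdist Ω (γ 0) = infDist (γ 0) F := rfl
    have h1 : bdist Ω (γ 1) = infDist (γ 1) F := rfl
    rw [h0, h1, Real.log_div (hpos 1 (by norm_num)).ne' (hpos 0 (by norm_num)).ne']
  rw [ge_iff_le, hlogdiv]
  exact habs
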